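/- For all u,v,w ∈ S_∞, the skew divided difference operator applied to a single Schubert polynomial satisfies ∂_{w/v} 𝔖_u(x) = c̄_{u,v}^w(x,0), i.e. it equals the double Schubert structure constant c̄_{u,v}^w(t,y) with each t_i replaced by x_i and each y_i replaced by 0. -/

import Mathlib

open MvPolynomial

noncomputable section

namespace BPDPuzzle

/-- `x ⊖ y = (x - y)/(1 + β·y)`. -/
def ominus {K : Type*} [Field K] (β a b : K) : K := (a - b) / (1 + β * b)

/-- A permutation of `ℕ` lying in `S_∞`, i.e. fixing all sufficiently large integers. -/
def FinPerm (w : Equiv.Perm ℕ) : Prop := ∃ N : ℕ, ∀ j, N ≤ j → w j = j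

/-- A permutation of `ℕ` lying in `S_n` (0-based positions `0, …, n-1`). -/
def InSn (n : ℕ) (w : Equiv.Perm ℕ) : Prop := ∀ j, n ≤ j → w j = j

/-- Coxeter length: the number of inversions. -/
def len (w : Equiv.Perm ℕ) : ℕ := Set.ncard {p : ℕ × ℕ | p.1 < p.2 ∧ w p.2 < w p.1}

/-- The simple transposition `s_i`, exchanging the (0-based) positions `i` and `i+1`. -/
def sTr (i : ℕ) : Equiv.Perm ℕ := Equiv.swap i (i + 1)

/-- `u` and `v` have separated descents at position `k`, i.e.
`maxdes(u) ≤ k ≤ mindes(v)` (in 0-based conventions: `u` has no descent at any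
0-based position `≥ k` and `v` has no descent at any 0-based position `< k-1`). -/
def SepDesc (k : ℕ) (u v : Equiv.Perm ℕ) : Prop :=
  (∀ i, k ≤ i → u i ≤ u (i + 1)) ∧ (∀ i, i + 1 < k → v i ≤ v (i + 1))

/-- The longest element `n ⋯ 2 1` of `S_n`, extended by the identity. -/
def revPerm (n : ℕ) : Equiv.Perm ℕ where
  toFun j := if j < n then n - 1 - j else j
  invFun j := if j < n then n - 1 - j else j
  left_inv j := by dsimp only; split_ifs <;> omega
  right_inv j := by dsimp only; split_ifs <;> omega

/-- Exchange the values of a valuation at the indices `i` and `i+1`. -/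
def swapVal {K : Type*} (t : ℕ → K) (i : ℕ) : ℕ → K :=
  fun j => if j = i then t (i + 1) else if j = i + 1 then t i else t j

/-- The defining properties of the family of double Grothendieck polynomials
`𝔊_w(x, t)`, viewed as a family of polynomials in the `x`-variables depending on
a valuation `t` of the second set of variables:  the initial condition
`𝔊_{n⋯21}(x,t) = ∏_{i+j≤n} (x_i ⊖ t_j)` together with the Demazure recursion
`π_i 𝔊_w = 𝔊_{w s_i}` whenever `w(i) > w(i+1)` (the latter written with the
denominator `x_i - x_{i+1}` cleared). -/
def GrothFamily {K : Type*} [Field K] (β : K)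
    (G : (ℕ → K) → Equiv.Perm ℕ → MvPolynomial ℕ K) : Prop :=
  ∀ t : ℕ → K, (∀ j, 1 + β * t j ≠ 0) →
    (∀ n : ℕ, G t (revPerm n) =
      ∏ i ∈ Finset.range n, ∏ j ∈ Finset.range (n - 1 - i),
        C ((1 + β * t j)⁻¹) * (X i - C (t j))) ∧
    (∀ (w : Equiv.Perm ℕ) (i : ℕ), w (i + 1) < w i →
      (X i - X (i + 1)) * G t (w * sTr i) =
        (1 + C β * X (i + 1)) * G t w
          - (1 + C β * X i) * rename ⇑(Equiv.swap i (i + 1)) (G t w))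

/-- The defining property of the structure constants `c_{u,v}^w(t,y)`:
`𝔊_u(x,y) · 𝔊_v(x,t) = Σ_w c_{u,v}^w(t,y) · 𝔊_w(x,t)`, the (finitely supported)
sum ranging over the permutations `w ∈ S_∞`. -/
def StructConsts {K : Type*} [Field K] (β : K)
    (G : (ℕ → K) → Equiv.Perm ℕ → MvPolynomial ℕ K)
    (c : (ℕ → K) → (ℕ → K) → Equiv.Perm ℕ → Equiv.Perm ℕ → Equiv.Perm ℕ → K) : Prop :=
  ∀ t y : ℕ → K, (∀ j, 1 + β * t j ≠ 0) → (∀ j, 1 + β * y j ≠ 0) →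
    ∀ u v : Equiv.Perm ℕ, FinPerm u → FinPerm v →
      {w : Equiv.Perm ℕ | c t y u v w ≠ 0}.Finite ∧
      (∀ w, ¬ FinPerm w → c t y u v w = 0) ∧
      G y u * G t v = ∑ᶠ w : Equiv.Perm ℕ, C (c t y u v w) * G t w

/-! ### The lattice model / pipe puzzles -/

/-- A state of the `n × n` lattice model: labels in `{0, …, n}` on all horizontal
and vertical (half-)edges.  `sst.1 i j` is the `j`-th horizontal (half-)edge of row
`i` (`j = 0` being the left boundary and `j = n` the right boundary), and
`sst.2 i j` is the `i`-th vertical (half-)edge of column `j` (`i = 0` the top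
boundary, `i = n` the bottom boundary). -/
abbrev GridState (n : ℕ) : Type :=
  (Fin n → Fin (n + 1) → Fin (n + 1)) × (Fin (n + 1) → Fin n → Fin (n + 1))

/-- The label on the north edge of the tile in row `i`, column `j`. -/
def labN {n : ℕ} (sst : GridState n) (i j : Fin n) : ℕ := (sst.2 i.castSucc j : ℕ)
/-- The label on the east edge of the tile in row `i`, column `j`. -/
def labE {n : ℕ} (sst : GridState n) (i j : Fin n) : ℕ := (sst.1 i j.succ : ℕ)
/-- The label on the west edge of the tile in row `i`, column `j`. -/
def labW {n : ℕ} (sst : GridState n) (i j : Fin n) : ℕ := (sst.1 i j.castSucc : ℕ)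
/-- The label on the south edge of the tile in row `i`, column `j`. -/
def labS {n : ℕ} (sst : GridState n) (i j : Fin n) : ℕ := (sst.2 i.succ j : ℕ)

/-- Boundary label `κ_u` on the right side (0-based row `i`, 1-based pipe labels). -/
def kappaLab (k : ℕ) (u : Equiv.Perm ℕ) (i : ℕ) : ℕ :=
  if u⁻¹ i < k then u⁻¹ i + 1 else 0

/-- Boundary label `θ_v` on the top side (0-based column `j`, 1-based pipe labels). -/
def thetaLab (k : ℕ) (v : Equiv.Perm ℕ) (j : ℕ) : ℕ :=
  if k ≤ v⁻¹ j then v⁻¹ j + 1 else 0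

/-- Boundary label `η_w` on the bottom side (0-based column `j`, 1-based pipe labels). -/
def etaLab (w : Equiv.Perm ℕ) (j : ℕ) : ℕ := w⁻¹ j + 1

/-- The boundary condition for pipe puzzles for `(u, v, w)`: left edges all `0`,
right edges `κ_u`, top edges `θ_v`, bottom edges `η_w`. -/
def BoundaryCond (n k : ℕ) (u v w : Equiv.Perm ℕ) (sst : GridState n) : Prop :=
  (∀ i : Fin n, (sst.1 i 0 : ℕ) = 0) ∧
  (∀ i : Fin n, (sst.1 i (Fin.last n) : ℕ) = kappaLab k u (i : ℕ)) ∧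
  (∀ j : Fin n, (sst.2 0 j : ℕ) = thetaLab k v (j : ℕ)) ∧
  (∀ j : Fin n, (sst.2 (Fin.last n) j : ℕ) = etaLab w (j : ℕ))

/-- The admissible local configurations (tiles) of a pipe puzzle, in terms of the
four edge labels `N, E, W, S` around a tile:  the empty tile, the vertical pipe,
the horizontal pipe, the crossing (with the horizontal pipe carrying the smaller
label), the two elbows `⌟` and `⌐` (labels `≤ k` coming from the right side,
labels `> k` from the top side), and the bumping tiles (with the stated label
restrictions). -/
def LAdm (k N E W S : ℕ) : Prop :=
  (N = 0 ∧ E = 0 ∧ W = 0 ∧ S = 0) ∨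
  (E = 0 ∧ W = 0 ∧ 0 < N ∧ N = S) ∨
  (N = 0 ∧ S = 0 ∧ 0 < E ∧ E = W) ∨
  (0 < E ∧ E = W ∧ E < N ∧ N = S) ∨
  (E = 0 ∧ S = 0 ∧ 0 < N ∧ N = W ∧ N ≤ k) ∨
  (E = 0 ∧ S = 0 ∧ N = W ∧ k < N) ∨
  (N = 0 ∧ W = 0 ∧ 0 < E ∧ E = S ∧ E ≤ k) ∨
  (N = 0 ∧ W = 0 ∧ E = S ∧ k < E) ∨
  (0 < E ∧ E = S ∧ E < N ∧ N = W ∧ N ≤ k) ∨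
  (k < E ∧ E = S ∧ E < N ∧ N = W) ∨
  (0 < N ∧ N = W ∧ N ≤ k ∧ E = S ∧ k < E)

/-- The admissible local configurations of a Schubert pipe puzzle (no bumping
tiles; crossings have the horizontal pipe carrying the smaller label). -/
def LAdm0 (N E W S : ℕ) : Prop :=
  (N = 0 ∧ E = 0 ∧ W = 0 ∧ S = 0) ∨
  (E = 0 ∧ W = 0 ∧ 0 < N ∧ N = S) ∨
  (N = 0 ∧ S = 0 ∧ 0 < E ∧ E = W) ∨
  (0 < E ∧ E = W ∧ E < N ∧ N = S) ∨
  (E = 0 ∧ S = 0 ∧ 0 < N ∧ N = W) ∨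
  (N = 0 ∧ W = 0 ∧ 0 < E ∧ E = S)

/-- The vertex weight `L(x; N, E, W, S)` of the lattice model (equivalently, the
weight of the corresponding pipe-puzzle tile), with spectral parameter `x`. -/
def Lwt {K : Type*} [Field K] (β : K) (k : ℕ) (x : K) (N E W S : ℕ) : K :=
  if N = 0 ∧ E = 0 ∧ W = 0 ∧ S = 0 then x
  else if E = 0 ∧ W = 0 ∧ 0 < N ∧ N = S then 1
  else if N = 0 ∧ S = 0 ∧ 0 < E ∧ E = W then 1
  else if 0 < E ∧ E = W ∧ E < N ∧ N = S then 1
  else if E = 0 ∧ S = 0 ∧ 0 < N ∧ N = W ∧ N ≤ k then 1 + β * x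
  else if E = 0 ∧ S = 0 ∧ N = W ∧ k < N then 1
  else if N = 0 ∧ W = 0 ∧ 0 < E ∧ E = S ∧ E ≤ k then 1
  else if N = 0 ∧ W = 0 ∧ E = S ∧ k < E then 1 + β * x
  else if 0 < E ∧ E = S ∧ E < N ∧ N = W ∧ N ≤ k then β
  else if k < E ∧ E = S ∧ E < N ∧ N = W then β
  else if 0 < N ∧ N = W ∧ N ≤ k ∧ E = S ∧ k < E then β * (1 + β * x)
  else 0

/-- The set of pipe puzzles for `(u, v, w)` (with separated-descent parameter `k`),
encoded as admissible states of the lattice model. -/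
def PP (n k : ℕ) (u v w : Equiv.Perm ℕ) : Set (GridState n) :=
  {sst | BoundaryCond n k u v w sst ∧
    ∀ i j : Fin n, LAdm k (labN sst i j) (labE sst i j) (labW sst i j) (labS sst i j)}

/-- The set of Schubert pipe puzzles for `(u, v, w)`. -/
def PP0 (n k : ℕ) (u v w : Equiv.Perm ℕ) : Set (GridState n) :=
  {sst | BoundaryCond n k u v w sst ∧
    ∀ i j : Fin n, LAdm0 (labN sst i j) (labE sst i j) (labW sst i j) (labS sst i j)}

/-- The weight `wt(π)` of a pipe puzzle: the product over all tiles, the tile in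
row `i` and column `j` having spectral parameter `t_j ⊖ y_i`. -/
def stateWt {K : Type*} [Field K] (β : K) (k : ℕ) (t y : ℕ → K) {n : ℕ}
    (sst : GridState n) : K :=
  ∏ i : Fin n, ∏ j : Fin n,
    Lwt β k (ominus β (t (j : ℕ)) (y (i : ℕ)))
      (labN sst i j) (labE sst i j) (labW sst i j) (labS sst i j)

/-- The Schubert weight `wt₀(π)`: the product of `t_j - y_i` over the positions
`(i, j)` of the empty tiles. -/
def stateWt0 {K : Type*} [Field K] (t y : ℕ → K) {n : ℕ} (sst : GridState n) : K :=
  ∏ i : Fin n, ∏ j : Fin n,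
    if labN sst i j = 0 ∧ labE sst i j = 0 ∧ labW sst i j = 0 ∧ labS sst i j = 0
    then t (j : ℕ) - y (i : ℕ) else 1

-- ### Auxiliary development

def invSet (w : Equiv.Perm ℕ) : Set (ℕ × ℕ) := {p | p.1 < p.2 ∧ w p.2 < w p.1}

lemma len_def (w : Equiv.Perm ℕ) : len w = (invSet w).ncard := rfl

lemma mem_invSet {w : Equiv.Perm ℕ} {p q : ℕ} : (p, q) ∈ invSet w ↔ p < q ∧ w q < w p :=
  Iff.rfl

lemma InSn.lt {N : ℕ} {w : Equiv.Perm ℕ} (h : InSn N w) {j : ℕ} (hj : j < N) : w j < N := by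
  by_contra hge
  push_neg at hge
  have h1 : w (w j) = w j := h _ hge
  have := w.injective h1
  omega

lemma invSet_subset {N : ℕ} {w : Equiv.Perm ℕ} (h : InSn N w) :
    invSet w ⊆ Set.Iio N ×ˢ Set.Iio N := by
  rintro ⟨p, q⟩ hmem
  rw [mem_invSet] at hmem
  obtain ⟨hpq, hinv⟩ := hmem
  have hq : q < N := by
    by_contra hq
    push_neg at hq
    have hwq : w q = q := h _ hq
    by_cases hp : p < N
    · have := h.lt hp; omega
    · push_neg at hp
      have hwp : w p = p := h _ hp
      omega
  exact ⟨by simpa using lt_trans hpq hq, by simpa using hq⟩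

lemma invSet_finite {N : ℕ} {w : Equiv.Perm ℕ} (h : InSn N w) : (invSet w).Finite :=
  ((Set.finite_Iio N).prod (Set.finite_Iio N)).subset (invSet_subset h)

lemma len_one : len (1 : Equiv.Perm ℕ) = 0 := by
  have : invSet (1 : Equiv.Perm ℕ) = ∅ := by
    ext ⟨p, q⟩
    simp only [invSet, Set.mem_setOf_eq, Set.mem_empty_iff_false, iff_false, not_and]
    intro h
    simp only [Equiv.Perm.one_apply]
    omega
  rw [len_def, this, Set.ncard_empty]

lemma exists_inversion {z : Equiv.Perm ℕ} (hz : z ≠ 1) : (invSet z).Nonempty := by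
  have hex : ∃ j, z j ≠ j := by
    by_contra h
    push_neg at h
    exact hz (Equiv.ext h)
  classical
  have hspec : z (Nat.find hex) ≠ Nat.find hex := Nat.find_spec hex
  have hmin : ∀ k, k < Nat.find hex → z k = k := fun k hk => by
    have := Nat.find_min hex hk
    simpa using this
  generalize hj : Nat.find hex = j at hspec hmin
  have h1 : j < z j := by
    rcases lt_trichotomy (z j) j with h | h | h
    · have := hmin _ h
      have := z.injective this
      omega
    · omega
    · exact h
  have h2 : j < z⁻¹ j := by
    rcases lt_trichotomy (z⁻¹ j) j with h | h | h
    · have h3 := hmin _ h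
      have h4 : z (z⁻¹ j) = j := z.apply_symm_apply j
      rw [h3] at h4; omega
    · have h4 : z (z⁻¹ j) = j := z.apply_symm_apply j
      rw [h] at h4; omega
    · exact h
  refine ⟨(j, z⁻¹ j), ?_⟩
  rw [mem_invSet]
  exact ⟨h2, by simpa [show z (z⁻¹ j) = j from z.apply_symm_apply j] using h1⟩

lemma len_ne_zero {N : ℕ} {z : Equiv.Perm ℕ} (hN : InSn N z) (hz : z ≠ 1) : len z ≠ 0 := by
  rw [len_def, Ne, Set.ncard_eq_zero (invSet_finite hN)]
  exact (exists_inversion hz).ne_empty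

-- continuation: length lemmas
section Part2
variable {N i : ℕ} {w σ : Equiv.Perm ℕ}

lemma sTr_apply_left (i : ℕ) : sTr i i = i + 1 := Equiv.swap_apply_left i (i + 1)
lemma sTr_apply_right (i : ℕ) : sTr i (i + 1) = i := Equiv.swap_apply_right i (i + 1)
lemma sTr_apply_other {i k : ℕ} (h1 : k ≠ i) (h2 : k ≠ i + 1) : sTr i k = k :=
  Equiv.swap_apply_of_ne_of_ne h1 h2

lemma sTr_apply_def (i k : ℕ) : sTr i k = if k = i then i + 1 else if k = i + 1 then i else k := by
  rw [sTr, Equiv.swap_apply_def]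

lemma mul_sTr_apply (w : Equiv.Perm ℕ) (i k : ℕ) : (w * sTr i) k = w (sTr i k) := rfl

lemma sTr_mul_self (i : ℕ) : sTr i * sTr i = 1 := Equiv.swap_mul_self i (i + 1)

lemma mul_sTr_sTr (w : Equiv.Perm ℕ) (i : ℕ) : w * sTr i * sTr i = w := by
  rw [mul_assoc, sTr_mul_self, mul_one]

lemma InSn.mul_sTr (h : InSn N w) (hi : i + 1 < N) : InSn N (w * sTr i) := by
  intro j hj
  rw [mul_sTr_apply, sTr_apply_other (by omega) (by omega)]
  exact h j hj

lemma InSn.one (N : ℕ) : InSn N (1 : Equiv.Perm ℕ) := fun j _ => rfl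

lemma InSn.mono {N M : ℕ} (h : InSn N w) (hNM : N ≤ M) : InSn M w := fun j hj => h j (le_trans hNM hj)

/-- inversion set of `w * sTr i` at an ascent. -/
lemma invSet_mul_sTr (hasc : w i < w (i + 1)) :
    invSet (w * sTr i) =
      (fun p : ℕ × ℕ => (sTr i p.1, sTr i p.2)) '' invSet w ∪ {(i, i + 1)} := by
  have hss : ∀ k, sTr i (sTr i k) = k := fun k => by
    rw [sTr]; exact Equiv.swap_apply_self _ _ k
  ext ⟨p, q⟩
  simp only [Set.mem_union, Set.mem_image, Set.mem_singleton_iff, Prod.ext_iff, Prod.mk.injEq]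
  constructor
  · intro hmem
    rw [mem_invSet] at hmem
    obtain ⟨hpq, hinv⟩ := hmem
    rw [mul_sTr_apply, mul_sTr_apply] at hinv
    by_cases hpi : p = i ∧ q = i + 1
    · exact Or.inr ⟨hpi.1, hpi.2⟩
    · left
      refine ⟨(sTr i p, sTr i q), ?_, by simp [hss], by simp [hss]⟩
      rw [mem_invSet]
      refine ⟨?_, hinv⟩
      rw [sTr_apply_def, sTr_apply_def]
      split_ifs <;> omega
  · rintro (⟨⟨p', q'⟩, hq'mem, h1, h2⟩ | ⟨h1, h2⟩)
    · rw [mem_invSet] at hq'mem ⊢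
      obtain ⟨hpq', hinv'⟩ := hq'mem
      subst h1; subst h2
      have hne : ¬(p' = i ∧ q' = i + 1) := by
        rintro ⟨rfl, rfl⟩
        omega
      constructor
      · simp only [sTr_apply_def]
        split_ifs <;> omega
      · rw [mul_sTr_apply, mul_sTr_apply, hss, hss]
        exact hinv'
    · subst h1; subst h2
      rw [mem_invSet]
      refine ⟨by omega, ?_⟩
      rw [mul_sTr_apply, mul_sTr_apply, sTr_apply_left, sTr_apply_right]
      exact hasc

lemma len_ascent (hfin : (invSet w).Finite) (hasc : w i < w (i + 1)) :
    len (w * sTr i) = len w + 1 := by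
  have hinj : Function.Injective (fun p : ℕ × ℕ => (sTr i p.1, sTr i p.2)) := by
    intro a b hab
    simp only [Prod.mk.injEq] at hab
    exact Prod.ext ((sTr i).injective hab.1) ((sTr i).injective hab.2)
  have hss : ∀ k, sTr i (sTr i k) = k := fun k => by
    rw [sTr]; exact Equiv.swap_apply_self _ _ k
  have hnotmem : (i, i + 1) ∉ (fun p : ℕ × ℕ => (sTr i p.1, sTr i p.2)) '' invSet w := by
    rintro ⟨⟨p', q'⟩, hmem, heq⟩
    simp only [Prod.mk.injEq] at heq
    have h1 : p' = i + 1 := by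
      have := congrArg (sTr i) heq.1
      rwa [hss, sTr_apply_left] at this
    have h2 : q' = i := by
      have := congrArg (sTr i) heq.2
      rwa [hss, sTr_apply_right] at this
    rw [mem_invSet] at hmem
    omega
  rw [len_def, len_def, invSet_mul_sTr hasc, Set.union_singleton,
    Set.ncard_insert_of_notMem hnotmem (hfin.image _),
    Set.ncard_image_of_injective _ hinj]

lemma len_descent (hfin : (invSet (w * sTr i)).Finite) (hdes : w (i + 1) < w i) :
    len w = len (w * sTr i) + 1 := by
  have hasc : (w * sTr i) i < (w * sTr i) (i + 1) := by
    rw [mul_sTr_apply, mul_sTr_apply, sTr_apply_left, sTr_apply_right]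
    exact hdes
  have := len_ascent hfin hasc
  rwa [mul_sTr_sTr] at this

lemma len_mul_sTr_le (hN : InSn N σ) (hi : i + 1 < N) : len (σ * sTr i) ≤ len σ + 1 := by
  rcases lt_trichotomy (σ i) (σ (i + 1)) with h | h | h
  · rw [len_ascent (invSet_finite hN) h]
  · exact absurd (σ.injective h) (by omega)
  · have := len_descent (invSet_finite (hN.mul_sTr hi)) h
    omega

end Part2
section Part3
variable {N i : ℕ} {w σ : Equiv.Perm ℕ}

lemma revPerm_apply (n j : ℕ) : revPerm n j = if j < n then n - 1 - j else j := rfl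

lemma InSn.revPerm (n : ℕ) : InSn n (BPDPuzzle.revPerm n) := by
  intro j hj
  rw [revPerm_apply, if_neg (by omega)]

lemma revPerm_zero : revPerm 0 = 1 := by
  apply Equiv.ext
  intro j
  rw [revPerm_apply, if_neg (by omega)]
  rfl

lemma invSet_revPerm (n : ℕ) : invSet (revPerm n) = {p : ℕ × ℕ | p.1 < p.2 ∧ p.2 < n} := by
  ext ⟨p, q⟩
  rw [mem_invSet]
  simp only [Set.mem_setOf_eq, revPerm_apply]
  split_ifs <;> omega

lemma exists_ascent (hN : InSn N w) (hne : w ≠ revPerm N) :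
    ∃ i, i + 1 < N ∧ w i < w (i + 1) := by
  by_contra hcon
  push_neg at hcon
  have hdes : ∀ i, i + 1 < N → w (i + 1) < w i := by
    intro i hi
    have h1 := hcon i hi
    have h2 : w (i + 1) ≠ w i := fun h => by have := w.injective h; omega
    omega
  have hN0 : N ≠ 0 := by
    intro h
    subst h
    exact hne (by rw [revPerm_zero]; exact Equiv.ext fun j => hN j (by omega))
  have hchain : ∀ d p, p + d < N → w (p + d) + d ≤ w p := by
    intro d
    induction d with
    | zero => intro p _; simp
    | succ d ih =>
      intro p hp
      have h1 := hdes (p + d) (by omega)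
      have h2 := ih p (by omega)
      have : p + (d + 1) = (p + d) + 1 := by omega
      rw [this]
      omega
  apply hne
  apply Equiv.ext
  intro j
  by_cases hj : j < N
  · have h1 : w (N - 1) + (N - 1 - j) ≤ w j := by
      have := hchain (N - 1 - j) j (by omega)
      rwa [show j + (N - 1 - j) = N - 1 by omega] at this
    have h2 : w j + j ≤ w 0 := by
      have := hchain j 0 (by omega)
      rwa [show 0 + j = j by omega] at this
    have h3 : w 0 < N := hN.lt (by omega)
    rw [revPerm_apply, if_pos hj]
    omega
  · rw [revPerm_apply, if_neg hj]
    exact hN j (by omega)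

lemma len_lt_of_ne_revPerm (hN : InSn N w) (hne : w ≠ revPerm N) :
    len w < len (revPerm N) := by
  obtain ⟨i, hi, hasc⟩ := exists_ascent hN hne
  rw [len_def, len_def]
  apply Set.ncard_lt_ncard
  · constructor
    · intro p hp
      have hsub := invSet_subset hN hp
      rw [invSet_revPerm]
      obtain ⟨h1, h2⟩ := hsub
      exact ⟨hp.1, by simpa using h2⟩
    · intro hsub
      have : (i, i + 1) ∈ invSet w := by
        apply hsub
        rw [invSet_revPerm]
        exact ⟨by omega, hi⟩
      rw [mem_invSet] at this
      omega
  · exact invSet_finite (InSn.revPerm N)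

lemma exists_low (hN : InSn N σ) (hne : σ ≠ revPerm N) :
    ∃ i, i < N ∧ σ i + i + 2 ≤ N := by
  by_contra hcon
  push_neg at hcon
  have hge : ∀ i, i < N → σ i + i + 1 ≥ N := by
    intro i hi
    have := hcon i hi
    omega
  have hval : ∀ i, i < N → σ i = N - 1 - i := by
    intro i
    induction i using Nat.strong_induction_on with
    | _ i ih =>
      intro hi
      have h1 := hge i hi
      have h2 : σ i < N := hN.lt hi
      by_contra hneq
      have h3 : σ i + i + 1 > N := by omega
      set j := N - 1 - σ i with hj
      have hjlt : j < i := by omega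
      have h4 : σ j = N - 1 - j := ih j hjlt (by omega)
      have h5 : σ j = σ i := by omega
      have := σ.injective h5
      omega
  apply hne
  apply Equiv.ext
  intro j
  by_cases hj : j < N
  · rw [revPerm_apply, if_pos hj]
    exact hval j hj
  · rw [revPerm_apply, if_neg hj]
    exact hN j (by omega)

open Classical in
/-- index of the least ascent. -/
def ascIdx (w : Equiv.Perm ℕ) : ℕ :=
  if h : ∃ i, w i < w (i + 1) then Nat.find h else 0

lemma ascIdx_spec (hN : InSn N w) (hne : w ≠ revPerm N) :
    ascIdx w + 1 < N ∧ w (ascIdx w) < w (ascIdx w + 1) ∧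
      ∀ k, k < ascIdx w → ¬ (w k < w (k + 1)) := by
  obtain ⟨i, hi, hasc⟩ := exists_ascent hN hne
  have hex : ∃ i, w i < w (i + 1) := ⟨i, hasc⟩
  classical
  rw [show ascIdx w = Nat.find hex by rw [ascIdx, dif_pos hex]]
  refine ⟨?_, Nat.find_spec hex, fun k hk => Nat.find_min hex hk⟩
  have : Nat.find hex ≤ i := Nat.find_le hasc
  omega

end Part3
section DividedDifference
variable {R : Type*} [CommRing R] [IsDomain R]

/-- The substitution interpolating between `id` and the swap of `i, i+1`. -/
private def interp (i : ℕ) : ℕ → Polynomial (MvPolynomial ℕ R) := fun k =>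
  if k = i then Polynomial.X
  else if k = i + 1 then Polynomial.C (X i + X (i + 1)) - Polynomial.X
  else Polynomial.C (X k)

lemma dvd_sub_rename (i : ℕ) (f : MvPolynomial ℕ R) :
    (X i - X (i + 1) : MvPolynomial ℕ R) ∣ f - rename ⇑(Equiv.swap i (i + 1)) f := by
  set φ : MvPolynomial ℕ R →+* Polynomial (MvPolynomial ℕ R) :=
    eval₂Hom (Polynomial.C.comp C) (interp i) with hφ
  have h1 : Polynomial.eval (X i) (φ f) = f := by
    have : (Polynomial.evalRingHom (X i : MvPolynomial ℕ R)).comp φ = RingHom.id _ := by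
      apply ringHom_ext
      · intro a
        simp [hφ, interp]
      · intro k
        by_cases hk : k = i
        · subst hk; simp [hφ, interp]
        · by_cases hk' : k = i + 1
          · subst hk'; simp [hφ, interp, if_neg (by omega : ¬ i + 1 = i)]
          · simp [hφ, interp, if_neg hk, if_neg hk']
    exact RingHom.congr_fun this f
  have h2 : Polynomial.eval (X (i + 1)) (φ f) = rename ⇑(Equiv.swap i (i + 1)) f := by
    have : (Polynomial.evalRingHom (X (i + 1) : MvPolynomial ℕ R)).comp φ =
        (rename ⇑(Equiv.swap i (i + 1))).toRingHom := by
      apply ringHom_ext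
      · intro a
        simp [hφ, interp]
      · intro k
        by_cases hk : k = i
        · subst hk
          simp [hφ, interp, Equiv.swap_apply_left]
        · by_cases hk' : k = i + 1
          · subst hk'
            simp [hφ, interp, if_neg (by omega : ¬ i + 1 = i), Equiv.swap_apply_right]
          · simp [hφ, interp, if_neg hk, if_neg hk',
              Equiv.swap_apply_of_ne_of_ne hk hk']
    exact RingHom.congr_fun this f
  have := Polynomial.sub_dvd_eval_sub (X i) (X (i + 1)) (φ f)
  rwa [h1, h2] at this

/-- The divided difference operator `∂_i`. -/
def ddiff (i : ℕ) (f : MvPolynomial ℕ R) : MvPolynomial ℕ R :=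
  (dvd_sub_rename i f).choose

lemma ddiff_spec (i : ℕ) (f : MvPolynomial ℕ R) :
    (X i - X (i + 1)) * ddiff i f = f - rename ⇑(Equiv.swap i (i + 1)) f :=
  ((dvd_sub_rename i f).choose_spec).symm

lemma X_sub_X_ne {a b : ℕ} (h : a ≠ b) : (X a - X b : MvPolynomial ℕ R) ≠ 0 :=
  sub_ne_zero.mpr (fun he => h (X_injective he))

end DividedDifference
section DDRelations
variable {R : Type*} [CommRing R] [IsDomain R]

lemma rename_swap_invol (a b : ℕ) (f : MvPolynomial ℕ R) :
    rename ⇑(Equiv.swap a b) (rename ⇑(Equiv.swap a b) f) = f := by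
  rw [rename_rename, show (⇑(Equiv.swap a b) ∘ ⇑(Equiv.swap a b)) = id from
    funext fun x => Equiv.swap_apply_self _ _ x, rename_id, AlgHom.id_apply]

lemma rename_swap_comm {i j : ℕ} (h : i + 2 ≤ j) (f : MvPolynomial ℕ R) :
    rename ⇑(Equiv.swap i (i + 1)) (rename ⇑(Equiv.swap j (j + 1)) f) =
      rename ⇑(Equiv.swap j (j + 1)) (rename ⇑(Equiv.swap i (i + 1)) f) := by
  rw [rename_rename, rename_rename]
  exact congrArg (fun g => rename g f) (funext fun x => by
    simp only [Function.comp_apply, Equiv.swap_apply_def]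
    split_ifs <;> omega)

set_option maxHeartbeats 1000000 in
lemma rename_swap_braid (i : ℕ) (f : MvPolynomial ℕ R) :
    rename ⇑(Equiv.swap i (i + 1)) (rename ⇑(Equiv.swap (i + 1) (i + 1 + 1))
        (rename ⇑(Equiv.swap i (i + 1)) f)) =
      rename ⇑(Equiv.swap (i + 1) (i + 1 + 1)) (rename ⇑(Equiv.swap i (i + 1))
        (rename ⇑(Equiv.swap (i + 1) (i + 1 + 1)) f)) := by
  rw [rename_rename, rename_rename, rename_rename, rename_rename]
  exact congrArg (fun g => rename g f) (funext fun x => by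
    simp only [Function.comp_apply, Equiv.swap_apply_def]
    split_ifs <;> omega)

lemma ddiff_comm {i j : ℕ} (h : i + 2 ≤ j) (f : MvPolynomial ℕ R) :
    ddiff i (ddiff j f) = ddiff j (ddiff i f) := by
  have s1j : Equiv.swap i (i + 1) j = j := Equiv.swap_apply_of_ne_of_ne (by omega) (by omega)
  have s1j' : Equiv.swap i (i + 1) (j + 1) = j + 1 :=
    Equiv.swap_apply_of_ne_of_ne (by omega) (by omega)
  have s2i : Equiv.swap j (j + 1) i = i := Equiv.swap_apply_of_ne_of_ne (by omega) (by omega)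
  have s2i' : Equiv.swap j (j + 1) (i + 1) = i + 1 :=
    Equiv.swap_apply_of_ne_of_ne (by omega) (by omega)
  have e1 := ddiff_spec j f
  have e2 := ddiff_spec i (ddiff j f)
  have f1 := ddiff_spec i f
  have f2 := ddiff_spec j (ddiff i f)
  have eσ1 := congrArg (⇑(rename ⇑(Equiv.swap i (i + 1)) : MvPolynomial ℕ R →ₐ[R] MvPolynomial ℕ R)) e1
  simp only [map_mul, map_sub, rename_X, s1j, s1j'] at eσ1
  rw [rename_swap_comm h] at eσ1
  have fτ1 := congrArg (⇑(rename ⇑(Equiv.swap j (j + 1)) : MvPolynomial ℕ R →ₐ[R] MvPolynomial ℕ R)) f1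
  simp only [map_mul, map_sub, rename_X, s2i, s2i'] at fτ1
  have E : (X i - X (i + 1)) * ((X j - X (j + 1)) * ddiff i (ddiff j f)) =
      (X i - X (i + 1)) * ((X j - X (j + 1)) * ddiff j (ddiff i f)) := by
    linear_combination (X j - X (j + 1)) * e2 + e1 - eσ1 -
      (X i - X (i + 1)) * f2 - f1 + fτ1
  exact mul_left_cancel₀ (X_sub_X_ne (by omega))
    (mul_left_cancel₀ (X_sub_X_ne (by omega)) E)

lemma ddiff_braid (i : ℕ) (f : MvPolynomial ℕ R) :
    ddiff i (ddiff (i + 1) (ddiff i f)) = ddiff (i + 1) (ddiff i (ddiff (i + 1) f)) := by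
  have s1l : Equiv.swap i (i + 1) i = i + 1 := Equiv.swap_apply_left _ _
  have s1r : Equiv.swap i (i + 1) (i + 1) = i := Equiv.swap_apply_right _ _
  have s1o : Equiv.swap i (i + 1) (i + 1 + 1) = i + 1 + 1 :=
    Equiv.swap_apply_of_ne_of_ne (by omega) (by omega)
  have s2l : Equiv.swap (i + 1) (i + 1 + 1) (i + 1) = i + 1 + 1 := Equiv.swap_apply_left _ _
  have s2r : Equiv.swap (i + 1) (i + 1 + 1) (i + 1 + 1) = i + 1 := Equiv.swap_apply_right _ _
  have s2o : Equiv.swap (i + 1) (i + 1 + 1) i = i :=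
    Equiv.swap_apply_of_ne_of_ne (by omega) (by omega)
  have e1 := ddiff_spec i f
  have e2 := ddiff_spec (i + 1) (ddiff i f)
  have e3 := ddiff_spec i (ddiff (i + 1) (ddiff i f))
  have f1 := ddiff_spec (i + 1) f
  have f2 := ddiff_spec i (ddiff (i + 1) f)
  have f3 := ddiff_spec (i + 1) (ddiff i (ddiff (i + 1) f))
  -- σ g1 = g1
  have eS1 := congrArg (⇑(rename (R := R) ⇑(Equiv.swap i (i + 1)))) e1
  simp only [map_mul, map_sub, rename_X, s1l, s1r] at eS1
  rw [rename_swap_invol] at eS1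
  have hg1 : rename ⇑(Equiv.swap i (i + 1)) (ddiff i f) = ddiff i f := by
    apply mul_left_cancel₀ (X_sub_X_ne (show i ≠ i + 1 by omega))
    rw [e1]
    linear_combination -eS1
  -- τ h1 = h1
  have fT1 := congrArg (⇑(rename (R := R) ⇑(Equiv.swap (i + 1) (i + 1 + 1)))) f1
  simp only [map_mul, map_sub, rename_X, s2l, s2r] at fT1
  rw [rename_swap_invol] at fT1
  have hh1 : rename ⇑(Equiv.swap (i + 1) (i + 1 + 1)) (ddiff (i + 1) f) = ddiff (i + 1) f := by
    apply mul_left_cancel₀ (X_sub_X_ne (show i + 1 ≠ i + 1 + 1 by omega))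
    rw [f1]
    linear_combination -fT1
  -- eT1 : (a - c) * τ g1 = τ f - τ (σ f)
  have eT1 := congrArg (⇑(rename (R := R) ⇑(Equiv.swap (i + 1) (i + 1 + 1)))) e1
  simp only [map_mul, map_sub, rename_X, s2o, s2l] at eT1
  -- eS2 : (a - c) * σ g2 = g1 - σ (τ g1)
  have eS2 := congrArg (⇑(rename (R := R) ⇑(Equiv.swap i (i + 1)))) e2
  simp only [map_mul, map_sub, rename_X, s1r, s1o] at eS2
  rw [hg1] at eS2
  -- eST1 : (b - c) * σ (τ g1) = σ (τ f) - σ (τ (σ f))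
  have eST1 := congrArg (⇑(rename (R := R) ⇑(Equiv.swap i (i + 1)))) eT1
  simp only [map_mul, map_sub, rename_X, s1l, s1o] at eST1
  -- fS1 : (a - c) * σ h1 = σ f - σ (τ f)
  have fS1 := congrArg (⇑(rename (R := R) ⇑(Equiv.swap i (i + 1)))) f1
  simp only [map_mul, map_sub, rename_X, s1r, s1o] at fS1
  -- fT2 : (a - c) * τ h2 = h1 - τ (σ h1)
  have fT2 := congrArg (⇑(rename (R := R) ⇑(Equiv.swap (i + 1) (i + 1 + 1)))) f2
  simp only [map_mul, map_sub, rename_X, s2o, s2l] at fT2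
  rw [hh1] at fT2
  -- fTS1 : (a - b) * τ (σ h1) = τ (σ f) - τ (σ (τ f))
  have fTS1 := congrArg (⇑(rename (R := R) ⇑(Equiv.swap (i + 1) (i + 1 + 1)))) fS1
  simp only [map_mul, map_sub, rename_X, s2o, s2l, s2r] at fTS1
  -- the two grand expansions
  have hbr : rename ⇑(Equiv.swap i (i + 1)) (rename ⇑(Equiv.swap (i + 1) (i + 1 + 1))
      (rename ⇑(Equiv.swap i (i + 1)) f)) =
      rename ⇑(Equiv.swap (i + 1) (i + 1 + 1)) (rename ⇑(Equiv.swap i (i + 1))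
      (rename ⇑(Equiv.swap (i + 1) (i + 1 + 1)) f)) := rename_swap_braid i f
  have E2 : (X i - X (i + 1)) * ((X (i + 1) - X (i + 1 + 1)) *
      ((X i - X (i + 1 + 1)) * ddiff i (ddiff (i + 1) (ddiff i f)))) =
      (X i - X (i + 1)) * ((X (i + 1) - X (i + 1 + 1)) *
      ((X i - X (i + 1 + 1)) * ddiff (i + 1) (ddiff i (ddiff (i + 1) f)))) := by
    linear_combination (X (i + 1) - X (i + 1 + 1)) * (X i - X (i + 1 + 1)) * e3 +
      (X i - X (i + 1 + 1)) * e2 - eT1 - (X (i + 1) - X (i + 1 + 1)) * eS2 + eST1 + e1 -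
      ((X i - X (i + 1)) * (X i - X (i + 1 + 1)) * f3 +
        (X i - X (i + 1 + 1)) * f2 - fS1 - (X i - X (i + 1)) * fT2 + fTS1 + f1) - hbr
  exact mul_left_cancel₀ (X_sub_X_ne (by omega))
    (mul_left_cancel₀ (X_sub_X_ne (by omega))
      (mul_left_cancel₀ (X_sub_X_ne (by omega)) E2))

end DDRelations
section GenericFamily
variable {R : Type*} [CommRing R] [IsDomain R]

/-- top polynomial `∏_{i<N} ∏_{j<N-1-i} (x_i - t_j)`. -/
def topP (τv : ℕ → R) (N : ℕ) : MvPolynomial ℕ R :=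
  ∏ i ∈ Finset.range N, ∏ j ∈ Finset.range (N - 1 - i), (X i - C (τv j))

open Classical in
/-- fuel-based construction of the double Schubert family within `S_N`. -/
def Qaux (τv : ℕ → R) (N : ℕ) : ℕ → Equiv.Perm ℕ → MvPolynomial ℕ R
  | 0, _ => topP τv N
  | m + 1, w =>
    if w = revPerm N then topP τv N
    else ddiff (ascIdx w) (Qaux τv N m (w * sTr (ascIdx w)))

/-- the double Schubert polynomial family (within `S_N`). -/
def Qp (τv : ℕ → R) (N : ℕ) (w : Equiv.Perm ℕ) : MvPolynomial ℕ R :=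
  Qaux τv N (len (revPerm N) - len w) w

lemma Qaux_zero (τv : ℕ → R) (N : ℕ) (w : Equiv.Perm ℕ) : Qaux τv N 0 w = topP τv N := rfl

lemma Qaux_succ (τv : ℕ → R) (N m : ℕ) (w : Equiv.Perm ℕ) (hrev : w ≠ revPerm N) :
    Qaux τv N (m + 1) w = ddiff (ascIdx w) (Qaux τv N m (w * sTr (ascIdx w))) := by
  rw [Qaux, if_neg hrev]

lemma Qaux_succ_rev (τv : ℕ → R) (N m : ℕ) :
    Qaux τv N (m + 1) (revPerm N) = topP τv N := by
  rw [Qaux, if_pos rfl]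

lemma Qp_rev (τv : ℕ → R) (N : ℕ) : Qp τv N (revPerm N) = topP τv N := by
  rw [Qp, Nat.sub_self, Qaux_zero]

lemma Qaux_eq_Qp (τv : ℕ → R) (N : ℕ) :
    ∀ m (w : Equiv.Perm ℕ), InSn N w → len (revPerm N) - len w ≤ m →
      Qaux τv N m w = Qp τv N w := by
  intro m
  induction m using Nat.strong_induction_on with
  | _ m ih =>
  match m with
  | 0 =>
    intro w _ hle
    rw [Qp, Nat.le_zero.mp hle]
  | m + 1 =>
    intro w hw hle
    by_cases hrev : w = revPerm N
    · subst hrev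
      rw [Qp_rev, Qaux_succ_rev]
    · have hspec := ascIdx_spec hw hrev
      have hlen : len (w * sTr (ascIdx w)) = len w + 1 :=
        len_ascent (invSet_finite hw) hspec.2.1
      have hlt : len w < len (revPerm N) := len_lt_of_ne_revPerm hw hrev
      have hw' : InSn N (w * sTr (ascIdx w)) := hw.mul_sTr hspec.1
      rw [Qaux_succ τv N m w hrev, ih m (by omega) _ hw' (by omega)]
      have h2 : len (revPerm N) - len w = (len (revPerm N) - len (w * sTr (ascIdx w))) + 1 := by
        omega
      have hR : Qp τv N w = ddiff (ascIdx w) (Qp τv N (w * sTr (ascIdx w))) := by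
        rw [show Qp τv N w =
            Qaux τv N ((len (revPerm N) - len (w * sTr (ascIdx w))) + 1) w from by
          rw [Qp, ← h2], Qaux_succ τv N _ w hrev,
          ih (len (revPerm N) - len (w * sTr (ascIdx w))) (by omega) _ hw' (by omega)]
      rw [hR]

lemma Qp_step (τv : ℕ → R) {N : ℕ} {w : Equiv.Perm ℕ} (hw : InSn N w) (hrev : w ≠ revPerm N) :
    Qp τv N w = ddiff (ascIdx w) (Qp τv N (w * sTr (ascIdx w))) := by
  have hlt : len w < len (revPerm N) := len_lt_of_ne_revPerm hw hrev
  have h2 : len (revPerm N) - len w = (len (revPerm N) - len w - 1) + 1 := by omega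
  rw [Qp, h2]
  have hspec := ascIdx_spec hw hrev
  have hlen : len (w * sTr (ascIdx w)) = len w + 1 :=
    len_ascent (invSet_finite hw) hspec.2.1
  rw [Qaux_succ τv N _ w hrev, Qaux_eq_Qp τv N _ _ (hw.mul_sTr hspec.1) (by omega)]

end GenericFamily
section Consistency
variable {R : Type*} [CommRing R] [IsDomain R]

lemma revPerm_descent {N i : ℕ} (hi : i + 1 < N) : revPerm N (i + 1) < revPerm N i := by
  rw [revPerm_apply, revPerm_apply, if_pos (by omega), if_pos (by omega)]
  omega

set_option maxHeartbeats 1000000 in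
lemma sTr_braid_perm (j : ℕ) : sTr j * sTr (j + 1) * sTr j = sTr (j + 1) * sTr j * sTr (j + 1) := by
  apply Equiv.ext
  intro x
  show sTr j (sTr (j + 1) (sTr j x)) = sTr (j + 1) (sTr j (sTr (j + 1) x))
  simp only [sTr_apply_def]
  split_ifs <;> omega

lemma sTr_braid_perm' (j : ℕ) :
    sTr j * (sTr (j + 1) * sTr j) = sTr (j + 1) * (sTr j * sTr (j + 1)) := by
  rw [← mul_assoc, ← mul_assoc, sTr_braid_perm]

lemma sTr_comm_perm {i j : ℕ} (h : i + 2 ≤ j) : sTr i * sTr j = sTr j * sTr i := by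
  apply Equiv.ext
  intro x
  show sTr i (sTr j x) = sTr j (sTr i x)
  simp only [sTr_apply_def]
  split_ifs <;> omega

set_option maxHeartbeats 1000000 in
lemma Qp_consistent (τv : ℕ → R) (N : ℕ) :
    ∀ m (w : Equiv.Perm ℕ), InSn N w → len (revPerm N) - len w ≤ m →
      ∀ i, i + 1 < N → w i < w (i + 1) →
        Qp τv N w = ddiff i (Qp τv N (w * sTr i)) := by
  intro m
  induction m with
  | zero =>
    intro w hw hle i hiN hasc
    exfalso
    by_cases hrev : w = revPerm N
    · subst hrev
      have := revPerm_descent hiN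
      omega
    · have := len_lt_of_ne_revPerm hw hrev
      omega
  | succ m ih =>
    intro w hw hle i hiN hasc
    by_cases hrev : w = revPerm N
    · exfalso
      subst hrev
      have := revPerm_descent hiN
      omega
    have hspec := ascIdx_spec hw hrev
    by_cases hii : i = ascIdx w
    · subst hii
      exact Qp_step τv hw hrev
    have hi₀lt : ascIdx w < i := by
      by_contra hcon
      push_neg at hcon
      exact hspec.2.2 i (by omega) hasc
    have hlt : len w < len (revPerm N) := len_lt_of_ne_revPerm hw hrev
    have hw0 : InSn N (w * sTr (ascIdx w)) := hw.mul_sTr hspec.1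
    have hwi : InSn N (w * sTr i) := hw.mul_sTr hiN
    have hlen0 : len (w * sTr (ascIdx w)) = len w + 1 := len_ascent (invSet_finite hw) hspec.2.1
    have hleni : len (w * sTr i) = len w + 1 := len_ascent (invSet_finite hw) hasc
    have A1 : Qp τv N w = ddiff (ascIdx w) (Qp τv N (w * sTr (ascIdx w))) :=
      Qp_step τv hw hrev
    set i₀ := ascIdx w with hi₀def
    by_cases hadj : i = i₀ + 1
    · -- adjacent case
      subst hadj
      have hasc0 : w i₀ < w (i₀ + 1) := hspec.2.1
      have ha2 : (w * sTr i₀) (i₀ + 1) < (w * sTr i₀) (i₀ + 1 + 1) := by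
        simp only [mul_sTr_apply, sTr_apply_def]
        split_ifs <;> omega
      have A2 : Qp τv N (w * sTr i₀) =
          ddiff (i₀ + 1) (Qp τv N (w * sTr i₀ * sTr (i₀ + 1))) :=
        ih _ hw0 (by omega) (i₀ + 1) (by omega) ha2
      have hw01 : InSn N (w * sTr i₀ * sTr (i₀ + 1)) := hw0.mul_sTr (by omega)
      have hlen01 : len (w * sTr i₀ * sTr (i₀ + 1)) = len w + 2 := by
        rw [len_ascent (invSet_finite hw0) ha2]
        omega
      have ha3 : (w * sTr i₀ * sTr (i₀ + 1)) i₀ < (w * sTr i₀ * sTr (i₀ + 1)) (i₀ + 1) := by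
        simp only [mul_sTr_apply, sTr_apply_def]
        split_ifs <;> omega
      have A3 : Qp τv N (w * sTr i₀ * sTr (i₀ + 1)) =
          ddiff i₀ (Qp τv N (w * sTr i₀ * sTr (i₀ + 1) * sTr i₀)) :=
        ih _ hw01 (by omega) i₀ (by omega) ha3
      have hb1 : (w * sTr (i₀ + 1)) i₀ < (w * sTr (i₀ + 1)) (i₀ + 1) := by
        simp only [mul_sTr_apply, sTr_apply_def]
        split_ifs <;> omega
      have B1 : Qp τv N (w * sTr (i₀ + 1)) =
          ddiff i₀ (Qp τv N (w * sTr (i₀ + 1) * sTr i₀)) :=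
        ih _ hwi (by omega) i₀ (by omega) hb1
      have hwi0 : InSn N (w * sTr (i₀ + 1) * sTr i₀) := hwi.mul_sTr (by omega)
      have hlenb : len (w * sTr (i₀ + 1) * sTr i₀) = len w + 2 := by
        rw [len_ascent (invSet_finite hwi) hb1]
        omega
      have hb2 : (w * sTr (i₀ + 1) * sTr i₀) (i₀ + 1) <
          (w * sTr (i₀ + 1) * sTr i₀) (i₀ + 1 + 1) := by
        simp only [mul_sTr_apply, sTr_apply_def]
        split_ifs <;> omega
      have B2 : Qp τv N (w * sTr (i₀ + 1) * sTr i₀) =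
          ddiff (i₀ + 1) (Qp τv N (w * sTr (i₀ + 1) * sTr i₀ * sTr (i₀ + 1))) :=
        ih _ hwi0 (by omega) (i₀ + 1) (by omega) hb2
      have hperm : w * sTr i₀ * sTr (i₀ + 1) * sTr i₀ =
          w * sTr (i₀ + 1) * sTr i₀ * sTr (i₀ + 1) := by
        rw [mul_assoc, mul_assoc, mul_assoc, mul_assoc, sTr_braid_perm']
      rw [A1, A2, A3, hperm, ddiff_braid i₀, ← B2, ← B1]
    · -- far case
      have hfar : i₀ + 2 ≤ i := by omega
      have ha2 : (w * sTr i₀) i < (w * sTr i₀) (i + 1) := by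
        simp only [mul_sTr_apply, sTr_apply_def]
        split_ifs <;> omega
      have A2 : Qp τv N (w * sTr i₀) = ddiff i (Qp τv N (w * sTr i₀ * sTr i)) :=
        ih _ hw0 (by omega) i hiN ha2
      have hb1 : (w * sTr i) i₀ < (w * sTr i) (i₀ + 1) := by
        simp only [mul_sTr_apply, sTr_apply_def]
        split_ifs <;> omega
      have B1 : Qp τv N (w * sTr i) = ddiff i₀ (Qp τv N (w * sTr i * sTr i₀)) :=
        ih _ hwi (by omega) i₀ (by omega) hb1
      have hperm : w * sTr i₀ * sTr i = w * sTr i * sTr i₀ := by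
        rw [mul_assoc, mul_assoc, sTr_comm_perm hfar]
      rw [A1, A2, hperm, ddiff_comm hfar, ← B1]

lemma Qp_ascent (τv : ℕ → R) {N : ℕ} {w : Equiv.Perm ℕ} {i : ℕ} (hw : InSn N w)
    (hiN : i + 1 < N) (hasc : w i < w (i + 1)) :
    Qp τv N w = ddiff i (Qp τv N (w * sTr i)) :=
  Qp_consistent τv N (len (revPerm N) - len w) w hw le_rfl i hiN hasc

lemma eval_topP (τv : ℕ → R) {N : ℕ} {σ : Equiv.Perm ℕ} (hσ : InSn N σ)
    (hne : σ ≠ revPerm N) :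
    eval (fun k => τv (σ k)) (topP τv N) = 0 := by
  obtain ⟨i, hiN, hlow⟩ := exists_low hσ hne
  rw [topP, map_prod]
  apply Finset.prod_eq_zero (Finset.mem_range.mpr hiN)
  rw [map_prod]
  apply Finset.prod_eq_zero (Finset.mem_range.mpr (show σ i < N - 1 - i by omega))
  rw [map_sub, eval_X, eval_C, sub_self]

lemma Qp_localize (τv : ℕ → R) (hτ : ∀ a b : ℕ, a ≠ b → τv a ≠ τv b) (N : ℕ) :
    ∀ m (w σ : Equiv.Perm ℕ), InSn N w → InSn N σ →
      len (revPerm N) - len w ≤ m → len σ < len w →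
        eval (fun k => τv (σ k)) (Qp τv N w) = 0 := by
  intro m
  induction m with
  | zero =>
    intro w σ hw hσ hle hlt
    by_cases hrev : w = revPerm N
    · subst hrev
      rw [Qp_rev]
      exact eval_topP τv hσ (fun h => by rw [h] at hlt; omega)
    · exfalso
      have := len_lt_of_ne_revPerm hw hrev
      omega
  | succ m ih =>
    intro w σ hw hσ hle hlt
    by_cases hrev : w = revPerm N
    · subst hrev
      rw [Qp_rev]
      exact eval_topP τv hσ (fun h => by rw [h] at hlt; omega)
    obtain ⟨i, hiN, hasc⟩ := exists_ascent hw hrev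
    have hrec := Qp_ascent τv hw hiN hasc
    have hspec2 := ddiff_spec i (Qp τv N (w * sTr i))
    rw [← hrec] at hspec2
    have hev := congrArg (eval (fun k => τv (σ k))) hspec2
    simp only [map_mul, map_sub, eval_X] at hev
    rw [eval_rename] at hev
    have hcomp : ((fun k => τv (σ k)) ∘ ⇑(Equiv.swap i (i + 1))) =
        (fun k => τv ((σ * sTr i) k)) := rfl
    rw [hcomp] at hev
    have hw' : InSn N (w * sTr i) := hw.mul_sTr hiN
    have hlen' : len (w * sTr i) = len w + 1 := len_ascent (invSet_finite hw) hasc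
    have hlt2 : len w < len (revPerm N) := len_lt_of_ne_revPerm hw hrev
    have h1 : eval (fun k => τv (σ k)) (Qp τv N (w * sTr i)) = 0 :=
      ih _ _ hw' hσ (by omega) (by omega)
    have h2 : eval (fun k => τv ((σ * sTr i) k)) (Qp τv N (w * sTr i)) = 0 :=
      ih _ _ hw' (hσ.mul_sTr hiN) (by omega)
        (by have := len_mul_sTr_le hσ hiN; omega)
    rw [h1, h2, sub_zero] at hev
    have hne' : τv (σ i) - τv (σ (i + 1)) ≠ 0 :=
      sub_ne_zero.mpr (hτ _ _ (fun h => by have := σ.injective h; omega))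
    exact (mul_eq_zero.mp hev).resolve_left hne'

end Consistency
section Specialize
variable {K : Type*} [Field K]

lemma S_one {S : (ℕ → K) → Equiv.Perm ℕ → MvPolynomial ℕ K} (hS : GrothFamily (0 : K) S)
    (t : ℕ → K) : S t 1 = 1 := by
  have hden : ∀ j, (1 : K) + 0 * t j ≠ 0 := fun j => by simp
  have h0 := (hS t hden).1 0
  rw [revPerm_zero] at h0
  simpa using h0

lemma Qp_spec_S {S : (ℕ → K) → Equiv.Perm ℕ → MvPolynomial ℕ K}
    (hS : GrothFamily (0 : K) S) (t : ℕ → K) (N : ℕ) :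
    ∀ m (w : Equiv.Perm ℕ), InSn N w → len (revPerm N) - len w ≤ m →
      MvPolynomial.map (eval t : MvPolynomial ℕ K →+* K)
        (Qp (fun k => (X k : MvPolynomial ℕ K)) N w) = S t w := by
  have hden : ∀ j, (1 : K) + 0 * t j ≠ 0 := fun j => by simp
  intro m
  induction m with
  | zero =>
    intro w hw hle
    have hrev : w = revPerm N := by
      by_contra hne
      have := len_lt_of_ne_revPerm hw hne
      omega
    subst hrev
    rw [Qp_rev, topP]
    have hhs := (hS t hden).1 N
    simp only [zero_mul, add_zero, inv_one, map_one, one_mul] at hhs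
    rw [hhs, map_prod]
    apply Finset.prod_congr rfl
    intro i _
    rw [map_prod]
    apply Finset.prod_congr rfl
    intro j _
    rw [map_sub, MvPolynomial.map_X, MvPolynomial.map_C, eval_X]
  | succ m ih =>
    intro w hw hle
    by_cases hrev : w = revPerm N
    · exact ih w hw (by subst hrev; omega)
    obtain ⟨i, hiN, hasc⟩ := exists_ascent hw hrev
    have hlt : len w < len (revPerm N) := len_lt_of_ne_revPerm hw hrev
    have hw' : InSn N (w * sTr i) := hw.mul_sTr hiN
    have hlen' : len (w * sTr i) = len w + 1 := len_ascent (invSet_finite hw) hasc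
    have hQ := ddiff_spec i (Qp (fun k => (X k : MvPolynomial ℕ K)) N (w * sTr i))
    rw [← Qp_ascent _ hw hiN hasc] at hQ
    have hmap := congrArg (MvPolynomial.map (eval t : MvPolynomial ℕ K →+* K)) hQ
    simp only [map_mul, map_sub, MvPolynomial.map_X, map_rename] at hmap
    rw [ih _ hw' (by omega)] at hmap
    -- hS recursion at (w * sTr i, i)
    have hdes : (w * sTr i) (i + 1) < (w * sTr i) i := by
      rw [mul_sTr_apply, mul_sTr_apply, sTr_apply_left, sTr_apply_right]
      exact hasc
    have hhs := (hS t hden).2 (w * sTr i) i hdes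
    rw [mul_sTr_sTr] at hhs
    simp only [C_0, zero_mul, add_zero, one_mul] at hhs
    apply mul_left_cancel₀ (X_sub_X_ne (show i ≠ i + 1 by omega))
    rw [hmap, hhs]

open Classical in
lemma S_localization {S : (ℕ → K) → Equiv.Perm ℕ → MvPolynomial ℕ K}
    (hS : GrothFamily (0 : K) S) (t : ℕ → K) {z : Equiv.Perm ℕ} (hz : FinPerm z) :
    eval t (S t z) = if z = 1 then 1 else 0 := by
  by_cases h1 : z = 1
  · subst h1
    rw [S_one hS t, if_pos rfl, map_one]
  rw [if_neg h1]
  obtain ⟨N, hN⟩ := hz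
  have hNz : InSn N z := hN
  have hτ : ∀ a b : ℕ, a ≠ b → (X a : MvPolynomial ℕ K) ≠ X b :=
    fun a b hab he => hab (X_injective he)
  have hU := Qp_spec_S hS t N (len (revPerm N) - len z) z hNz le_rfl
  have hlenz : len z ≠ 0 := len_ne_zero hNz h1
  have hL := Qp_localize (fun k => (X k : MvPolynomial ℕ K)) hτ N
    (len (revPerm N) - len z) z 1 hNz (InSn.one N) le_rfl
    (by rw [len_one]; omega)
  have hLL : eval (fun k => (X k : MvPolynomial ℕ K))
      (Qp (fun k => (X k : MvPolynomial ℕ K)) N z) = 0 := hL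
  have hcomp : ((eval t).comp
        (MvPolynomial.map (eval t : MvPolynomial ℕ K →+* K)) :
        MvPolynomial ℕ (MvPolynomial ℕ K) →+* K) =
      ((eval t).comp (eval (fun k => (X k : MvPolynomial ℕ K))) :
        MvPolynomial ℕ (MvPolynomial ℕ K) →+* K) := by
    apply ringHom_ext
    · intro a
      simp
    · intro k
      simp
  calc eval t (S t z) = eval t (MvPolynomial.map (eval t : MvPolynomial ℕ K →+* K)
        (Qp (fun k => (X k : MvPolynomial ℕ K)) N z)) := by rw [hU]
    _ = eval t (eval (fun k => (X k : MvPolynomial ℕ K))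
        (Qp (fun k => (X k : MvPolynomial ℕ K)) N z)) := RingHom.congr_fun hcomp _
    _ = 0 := by rw [hLL, map_zero]

end Specialize
section Main
variable {K : Type*} [Field K]

lemma FinPerm.one : FinPerm (1 : Equiv.Perm ℕ) := ⟨0, fun _ _ => rfl⟩

lemma FinPerm.mul {u v : Equiv.Perm ℕ} (hu : FinPerm u) (hv : FinPerm v) :
    FinPerm (u * v) := by
  obtain ⟨N1, h1⟩ := hu
  obtain ⟨N2, h2⟩ := hv
  refine ⟨max N1 N2, fun j hj => ?_⟩
  rw [Equiv.Perm.mul_apply, h2 j (le_trans (le_max_right _ _) hj),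
    h1 j (le_trans (le_max_left _ _) hj)]

lemma FinPerm.inv {u : Equiv.Perm ℕ} (hu : FinPerm u) : FinPerm u⁻¹ := by
  obtain ⟨N, h⟩ := hu
  refine ⟨N, fun j hj => ?_⟩
  have : u⁻¹ (u j) = j := u.symm_apply_apply j
  rwa [h j hj] at this

theorem skew_divided_difference_eq_structure_constant'
    (S : (ℕ → K) → Equiv.Perm ℕ → MvPolynomial ℕ K)
    (cbar : (ℕ → K) → (ℕ → K) → Equiv.Perm ℕ → Equiv.Perm ℕ → Equiv.Perm ℕ → K)
    (hS : GrothFamily (0 : K) S) (hc : StructConsts (0 : K) S cbar)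
    (D : Equiv.Perm ℕ → MvPolynomial ℕ K →ₗ[K] MvPolynomial ℕ K)
    (hD : ∀ (t : ℕ → K) (u w : Equiv.Perm ℕ), FinPerm u → FinPerm w →
      D w (S t u) = if len (u * w⁻¹) + len w = len u then S t (u * w⁻¹) else 0)
    (Dskew : Equiv.Perm ℕ → Equiv.Perm ℕ → MvPolynomial ℕ K →ₗ[K] MvPolynomial ℕ K)
    (hskewsupp : ∀ w v, ¬ FinPerm v → Dskew w v = 0)
    (hskewfin : ∀ (w : Equiv.Perm ℕ) (f : MvPolynomial ℕ K),
      {v : Equiv.Perm ℕ | Dskew w v f ≠ 0}.Finite)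
    (hLeib : ∀ (w : Equiv.Perm ℕ), FinPerm w → ∀ f g : MvPolynomial ℕ K,
      D w (f * g) = ∑ᶠ v : Equiv.Perm ℕ, Dskew w v f * D v g)
    (u v w : Equiv.Perm ℕ) (hu : FinPerm u) (hv : FinPerm v) (hw : FinPerm w) :
    ∀ t : ℕ → K,
      MvPolynomial.eval t (Dskew w v (S (fun _ => 0) u)) =
        cbar t (fun _ => 0) u v w := by
  intro t
  classical
  have hden : ∀ j, (1 : K) + 0 * t j ≠ 0 := fun j => by simp
  have hden0 : ∀ j, (1 : K) + 0 * (fun _ : ℕ => (0 : K)) j ≠ 0 := fun j => by simp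
  obtain ⟨hfinc, hvan, hexp⟩ := hc t (fun _ => 0) hden hden0 u v hu hv
  have hL := hLeib w hw (S (fun _ => 0) u) (S t v)
  -- localization helper
  have hloc : ∀ z : Equiv.Perm ℕ, FinPerm z →
      eval t (S t z) = if z = 1 then 1 else 0 := fun z hz => S_localization hS t hz
  -- Way 1 : eval t (D w (S0u * Stv)) = eval t (Dskew w v (S0u))
  have hsupp1 : (Function.support fun v' : Equiv.Perm ℕ =>
      Dskew w v' (S (fun _ => 0) u) * D v' (S t v)).Finite := by
    apply (hskewfin w (S (fun _ => 0) u)).subset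
    intro v' hv'
    simp only [Function.mem_support] at hv'
    intro hzero
    exact hv' (by rw [hzero, zero_mul])
  have way1 : eval t (D w (S (fun _ => 0) u * S t v)) =
      eval t (Dskew w v (S (fun _ => 0) u)) := by
    rw [hL]
    have hpush : eval t (∑ᶠ v' : Equiv.Perm ℕ,
          Dskew w v' (S (fun _ => 0) u) * D v' (S t v)) =
        ∑ᶠ v' : Equiv.Perm ℕ, eval t (Dskew w v' (S (fun _ => 0) u) * D v' (S t v)) :=
      (eval t : MvPolynomial ℕ K →+* K).toAddMonoidHom.map_finsum hsupp1
    rw [hpush]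
    have hsingle : ∀ v' : Equiv.Perm ℕ, v' ≠ v →
        eval t (Dskew w v' (S (fun _ => 0) u) * D v' (S t v)) = 0 := by
      intro v' hne
      by_cases hfp : FinPerm v'
      · rw [map_mul, hD t v v' hv hfp]
        split_ifs with hcond
        · rw [hloc (v * v'⁻¹) (FinPerm.mul hv (FinPerm.inv hfp)),
            if_neg (fun h => hne (mul_inv_eq_one.mp h).symm), mul_zero]
        · rw [map_zero, mul_zero]
      · rw [hskewsupp w v' hfp]
        simp
    rw [finsum_eq_single _ v hsingle, map_mul, hD t v v hv hv,
      if_pos (by rw [mul_inv_cancel, len_one, zero_add]),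
      hloc (v * v⁻¹) (FinPerm.mul hv (FinPerm.inv hv)), if_pos (mul_inv_cancel v), mul_one]
  -- Way 2 : eval t (D w (S0u * Stv)) = cbar t 0 u v w
  have hsupp2 : (Function.support fun w' : Equiv.Perm ℕ =>
      cbar t (fun _ => 0) u v w' • S t w').Finite := by
    apply hfinc.subset
    intro w' hw'
    simp only [Function.mem_support] at hw'
    intro hzero
    exact hw' (by rw [hzero, zero_smul])
  have hexp' : S (fun _ => 0) u * S t v =
      ∑ᶠ w' : Equiv.Perm ℕ, cbar t (fun _ => 0) u v w' • S t w' := by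
    rw [hexp]
    exact finsum_congr fun w' => by rw [smul_eq_C_mul]
  have hsupp3 : (Function.support fun w' : Equiv.Perm ℕ =>
      cbar t (fun _ => 0) u v w' • D w (S t w')).Finite := by
    apply hfinc.subset
    intro w' hw'
    simp only [Function.mem_support] at hw'
    intro hzero
    exact hw' (by rw [hzero, zero_smul])
  have way2 : eval t (D w (S (fun _ => 0) u * S t v)) = cbar t (fun _ => 0) u v w := by
    rw [hexp']
    have hpushD : D w (∑ᶠ w' : Equiv.Perm ℕ, cbar t (fun _ => 0) u v w' • S t w') =
        ∑ᶠ w' : Equiv.Perm ℕ, D w (cbar t (fun _ => 0) u v w' • S t w') :=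
      (D w).toAddMonoidHom.map_finsum hsupp2
    rw [hpushD, finsum_congr (fun w' : Equiv.Perm ℕ =>
      (D w).map_smul (cbar t (fun _ => 0) u v w') (S t w'))]
    have hpush : eval t (∑ᶠ w' : Equiv.Perm ℕ,
          cbar t (fun _ => 0) u v w' • D w (S t w')) =
        ∑ᶠ w' : Equiv.Perm ℕ, eval t (cbar t (fun _ => 0) u v w' • D w (S t w')) :=
      (eval t : MvPolynomial ℕ K →+* K).toAddMonoidHom.map_finsum hsupp3
    rw [hpush]
    have hsingle : ∀ w' : Equiv.Perm ℕ, w' ≠ w →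
        eval t (cbar t (fun _ => 0) u v w' • D w (S t w')) = 0 := by
      intro w' hne
      by_cases hfp : FinPerm w'
      · rw [smul_eq_C_mul, map_mul, eval_C, hD t w' w hfp hw]
        split_ifs with hcond
        · rw [hloc (w' * w⁻¹) (FinPerm.mul hfp (FinPerm.inv hw)),
            if_neg (fun h => hne (mul_inv_eq_one.mp h)), mul_zero]
        · rw [map_zero, mul_zero]
      · rw [hvan w' hfp, zero_smul]
        simp
    rw [finsum_eq_single _ w hsingle, smul_eq_C_mul, map_mul, eval_C, hD t w w hw hw,
      if_pos (by rw [mul_inv_cancel, len_one, zero_add]),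
      hloc (w * w⁻¹) (FinPerm.mul hw (FinPerm.inv hw)), if_pos (mul_inv_cancel w), mul_one]
  rw [← way1, way2]

end Main

/-- Proposition `Coro:SxxSxt` of the paper.  For all
`u, v, w ∈ S_∞`, the skew divided difference operator applied to a single
Schubert polynomial satisfies `∂_{w/v} 𝔖_u(x) = c̄_{u,v}^w(x, 0)`, i.e. it equals
the double Schubert structure constant `c̄_{u,v}^w(t,y)` with each `t_i`
replaced by `x_i` and each `y_i` by `0` (expressed by evaluating both sides of
the polynomial identity at an arbitrary valuation `t` of the `x`-variables).

Here `S` is the family of double Schubert polynomials (`β = 0` Grothendieck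
polynomials), `cbar` the associated structure constants, `D w` the divided
difference operator `∂_w` (characterized by its action on double Schubert
polynomials), and `Dskew w v` the skew operator `∂_{w/v}`, characterized by the
Leibniz-type expansion `∂_w(fg) = Σ_v (∂_{w/v} f)·(∂_v g)`. -/
theorem skew_divided_difference_eq_structure_constant
    {K : Type*} [Field K]
    (S : (ℕ → K) → Equiv.Perm ℕ → MvPolynomial ℕ K)
    (cbar : (ℕ → K) → (ℕ → K) → Equiv.Perm ℕ → Equiv.Perm ℕ → Equiv.Perm ℕ → K)
    (hS : GrothFamily (0 : K) S) (hc : StructConsts (0 : K) S cbar)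
    (D : Equiv.Perm ℕ → MvPolynomial ℕ K →ₗ[K] MvPolynomial ℕ K)
    (hD : ∀ (t : ℕ → K) (u w : Equiv.Perm ℕ), FinPerm u → FinPerm w →
      D w (S t u) = if len (u * w⁻¹) + len w = len u then S t (u * w⁻¹) else 0)
    (Dskew : Equiv.Perm ℕ → Equiv.Perm ℕ → MvPolynomial ℕ K →ₗ[K] MvPolynomial ℕ K)
    (hskewsupp : ∀ w v, ¬ FinPerm v → Dskew w v = 0)
    (hskewfin : ∀ (w : Equiv.Perm ℕ) (f : MvPolynomial ℕ K),
      {v : Equiv.Perm ℕ | Dskew w v f ≠ 0}.Finite)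
    (hLeib : ∀ (w : Equiv.Perm ℕ), FinPerm w → ∀ f g : MvPolynomial ℕ K,
      D w (f * g) = ∑ᶠ v : Equiv.Perm ℕ, Dskew w v f * D v g)
    (u v w : Equiv.Perm ℕ) (hu : FinPerm u) (hv : FinPerm v) (hw : FinPerm w) :
    ∀ t : ℕ → K,
      MvPolynomial.eval t (Dskew w v (S (fun _ => 0) u)) =
        cbar t (fun _ => 0) u v w :=
  skew_divided_difference_eq_structure_constant' S cbar hS hc D hD Dskew
    hskewsupp hskewfin hLeib u v w hu hv hw
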